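/- Let q be a power of a prime p and let F be an algebraically closed field of characteristic p containing 𝔽_q, equipped with a nonarchimedean absolute value |·|. Let r be a real number with 0 < r < 1 and let a, b, c, d ∈ F satisfy |a| ≤ r, |d| ≤ r, r ≤ |b|, and |c| ≤ r²/|b|. Then for any prescribed initial values u₀, w₀ ∈ F there exist sequences u, w : ℕ → F starting at u₀, w₀ which satisfy u_n − u_n^q = a·u_{n−1}^q + b·w_{n−1}^q and w_n − w_n^q = c·u_{n−1}^q + d·w_{n−1}^q for all n ≥ 1, and which obey the estimate max(|u_n|^q, (|b|/r)·|w_n|^q) ≤ rⁿ · max(|u₀|^q, (|b|/r)·|w₀|^q) for all n ≥ 0; in particular |u_n| → 0 and |w_n| → 0 as n → ∞. -/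

import Mathlib

open Polynomial

lemma exists_root_key {F : Type} [NormedField F] [IsUltrametricDist F] [IsAlgClosed F]
    (q : ℕ) (hq2 : 2 ≤ q) (t : F) : ∃ x : F, x - x ^ q = t ∧ ‖x‖ ^ q ≤ ‖t‖ := by
  classical
  set P : F[X] := X ^ q + (C t - X) with hP
  have hdeg : (C t - X : F[X]).degree < (q : ℕ) := by
    have h1 : (C t - X : F[X]).degree ≤ 1 := by
      refine le_trans (degree_sub_le _ _) ?_
      simp only [degree_X, max_le_iff]
      exact ⟨le_trans degree_C_le (by norm_num), le_refl _⟩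
    exact lt_of_le_of_lt h1 (by exact_mod_cast Nat.lt_of_lt_of_le one_lt_two hq2)
  have hmonic : P.Monic := monic_X_pow_add hdeg
  have hPdeg : P.degree = q := by
    rw [hP, degree_add_eq_left_of_degree_lt (by rwa [degree_X_pow]), degree_X_pow]
  have hPnat : P.natDegree = q := natDegree_eq_of_degree_eq_some hPdeg
  have hsplits : P.Splits := IsAlgClosed.splits P
  have hcard : P.roots.card = q := by
    rw [← hPnat]; exact (splits_iff_card_roots.mp hsplits)
  have hcoeff : P.coeff 0 = t := by
    simp [hP, coeff_X_pow]
    omega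
  have hprod : P.coeff 0 = (-1) ^ P.natDegree * P.roots.prod :=
    hsplits.coeff_zero_eq_prod_roots_of_monic hmonic
  have hnt : ‖t‖₊ = ‖P.roots.prod‖₊ := by
    rw [← hcoeff, hprod]
    simp [nnnorm_mul, nnnorm_pow]
  -- pick a root of minimal norm
  have hne : P.roots.toFinset.Nonempty := by
    rw [Multiset.toFinset_nonempty]
    intro h
    rw [h] at hcard
    simp at hcard
    omega
  obtain ⟨x, hxmem, hxmin⟩ := P.roots.toFinset.exists_min_image (fun y => ‖y‖₊) hne
  have hxroot : P.eval x = 0 := by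
    have := Multiset.mem_toFinset.mp hxmem
    exact (mem_roots (hmonic.ne_zero)).mp this
  refine ⟨x, ?_, ?_⟩
  · have : x ^ q + (t - x) = 0 := by simpa [hP] using hxroot
    linear_combination -this
  · have hle : ‖x‖₊ ^ q ≤ ‖t‖₊ := by
      have heq : ‖P.roots.prod‖₊ = (P.roots.map fun y => ‖y‖₊).prod :=
        map_multiset_prod (nnnormHom : F →*₀ NNReal) P.roots
      rw [hnt, heq]
      have := Multiset.pow_card_le_prod (s := P.roots.map (fun y => ‖y‖₊)) (a := ‖x‖₊) ?_
      · simpa [Multiset.card_map, hcard] using this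
      · intro z hz
        obtain ⟨y, hy, rfl⟩ := Multiset.mem_map.mp hz
        exact hxmin y (Multiset.mem_toFinset.mpr hy)
    exact_mod_cast hle

open Filter

lemma tendsto_of_pow_le_aux {x g : ℕ → ℝ} (hx : ∀ k, 0 ≤ x k)
    (hg : Tendsto g atTop (nhds 0)) (q : ℕ) (hq : q ≠ 0)
    (h : ∀ k, x k ^ q ≤ g k) : Tendsto x atTop (nhds 0) := by
  rw [Metric.tendsto_atTop] at hg ⊢
  intro ε hε
  set ε' := min ε 1 with hε'
  have hε'0 : 0 < ε' := lt_min hε one_pos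
  obtain ⟨N, hN⟩ := hg (ε' ^ q) (pow_pos hε'0 q)
  refine ⟨N, fun m hm => ?_⟩
  have h1 := hN m hm
  rw [Real.dist_eq, sub_zero] at h1 ⊢
  have h2 : x m ^ q < ε' ^ q := lt_of_le_of_lt (h m) (lt_of_le_of_lt (le_abs_self _) h1)
  have h3 : x m < ε' := by
    by_contra hcon
    push_neg at hcon
    exact absurd (pow_le_pow_left₀ hε'0.le hcon q) (not_le.mpr h2)
  rw [abs_of_nonneg (hx m)]
  exact lt_of_lt_of_le h3 (min_le_left _ _)




/-- Let `q = pⁿ` and let `F ⊇ 𝔽_q` be an algebraically closed field of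
characteristic `p` with a nonarchimedean absolute value.  Let `0 < r < 1` be real and let
`a, b, c, d ∈ F` satisfy `|a| ≤ r`, `|d| ≤ r`, `r ≤ |b|` and `|c| ≤ r²/|b|`.  Then for any
initial values `u₀, w₀` there are sequences `u, w : ℕ → F` starting at `u₀, w₀`, satisfying
`u_k - u_k^q = a u_{k-1}^q + b w_{k-1}^q` and `w_k - w_k^q = c u_{k-1}^q + d w_{k-1}^q` for all
`k ≥ 1`, and obeying
`max(|u_k|^q, (|b|/r)|w_k|^q) ≤ r^k · max(|u₀|^q, (|b|/r)|w₀|^q)`;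
in particular `|u_k| → 0` and `|w_k| → 0`. -/
theorem statement16
    (p n q : ℕ) [Fact p.Prime] (hn : n ≠ 0) (hq : q = p ^ n)
    (F : Type) [NormedField F] [IsUltrametricDist F] [IsAlgClosed F] [CharP F p]
    (φ : GaloisField p n →+* F)
    (r : ℝ) (hr0 : 0 < r) (hr1 : r < 1)
    (a b c d : F) (ha : ‖a‖ ≤ r) (hd : ‖d‖ ≤ r) (hb : r ≤ ‖b‖) (hc : ‖c‖ ≤ r ^ 2 / ‖b‖)
    (u₀ w₀ : F) :
    ∃ u w : ℕ → F, u 0 = u₀ ∧ w 0 = w₀ ∧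
      (∀ k : ℕ, u (k + 1) - (u (k + 1)) ^ q = a * (u k) ^ q + b * (w k) ^ q) ∧
      (∀ k : ℕ, w (k + 1) - (w (k + 1)) ^ q = c * (u k) ^ q + d * (w k) ^ q) ∧
      (∀ k : ℕ, max (‖u k‖ ^ q) ((‖b‖ / r) * ‖w k‖ ^ q)
        ≤ r ^ k * max (‖u₀‖ ^ q) ((‖b‖ / r) * ‖w₀‖ ^ q)) ∧
      Filter.Tendsto (fun k => ‖u k‖) Filter.atTop (nhds 0) ∧
      Filter.Tendsto (fun k => ‖w k‖) Filter.atTop (nhds 0) := by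
  have hq2 : 2 ≤ q := by
    rw [hq]
    calc 2 = 2 ^ 1 := by norm_num
    _ ≤ p ^ n := Nat.pow_le_pow_left (Fact.out (p := p.Prime)).two_le n |>.trans'
        (Nat.pow_le_pow_right (by norm_num) (Nat.one_le_iff_ne_zero.mpr hn))
  have key : ∀ t : F, ∃ x : F, x - x ^ q = t ∧ ‖x‖ ^ q ≤ ‖t‖ := exists_root_key q hq2
  choose f hf1 hf2 using key
  set v : ℕ → F × F := fun k =>
    Nat.rec (u₀, w₀) (fun _ pr => (f (a * pr.1 ^ q + b * pr.2 ^ q),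
      f (c * pr.1 ^ q + d * pr.2 ^ q))) k with hv
  have hb0 : (0 : ℝ) < ‖b‖ := lt_of_lt_of_le hr0 hb
  set M : ℕ → ℝ := fun k => max (‖(v k).1‖ ^ q) ((‖b‖ / r) * ‖(v k).2‖ ^ q) with hM
  have hMnonneg : ∀ k, 0 ≤ M k := fun k =>
    le_max_of_le_left (pow_nonneg (norm_nonneg _) q)
  have step : ∀ k, M (k + 1) ≤ r * M k := by
    intro k
    have hu : ‖(v k).1‖ ^ q ≤ M k := le_max_left _ _
    have hw : (‖b‖ / r) * ‖(v k).2‖ ^ q ≤ M k := le_max_right _ _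
    have hwn : (0 : ℝ) ≤ ‖(v k).2‖ ^ q := pow_nonneg (norm_nonneg _) q
    have hun : (0 : ℝ) ≤ ‖(v k).1‖ ^ q := pow_nonneg (norm_nonneg _) q
    have h1 : ‖(v (k + 1)).1‖ ^ q ≤ r * M k := by
      have e1 : (v (k + 1)).1 = f (a * (v k).1 ^ q + b * (v k).2 ^ q) := rfl
      rw [e1]
      refine le_trans (hf2 _) (le_trans (IsUltrametricDist.norm_add_le_max _ _) ?_)
      rw [max_le_iff, norm_mul, norm_mul, norm_pow, norm_pow]
      constructor
      · calc ‖a‖ * ‖(v k).1‖ ^ q ≤ r * ‖(v k).1‖ ^ q :=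
              mul_le_mul_of_nonneg_right ha hun
          _ ≤ r * M k := mul_le_mul_of_nonneg_left hu hr0.le
      · calc ‖b‖ * ‖(v k).2‖ ^ q = r * ((‖b‖ / r) * ‖(v k).2‖ ^ q) := by
              field_simp
          _ ≤ r * M k := mul_le_mul_of_nonneg_left hw hr0.le
    have h2 : (‖b‖ / r) * ‖(v (k + 1)).2‖ ^ q ≤ r * M k := by
      have e2 : (v (k + 1)).2 = f (c * (v k).1 ^ q + d * (v k).2 ^ q) := rfl
      rw [e2]
      have hy : ‖f (c * (v k).1 ^ q + d * (v k).2 ^ q)‖ ^ q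
          ≤ max (‖c‖ * ‖(v k).1‖ ^ q) (‖d‖ * ‖(v k).2‖ ^ q) := by
        refine le_trans (hf2 _) (le_trans (IsUltrametricDist.norm_add_le_max _ _) ?_)
        rw [norm_mul, norm_mul, norm_pow, norm_pow]
      have hbr : (0 : ℝ) ≤ ‖b‖ / r := le_of_lt (div_pos hb0 hr0)
      calc (‖b‖ / r) * ‖f (c * (v k).1 ^ q + d * (v k).2 ^ q)‖ ^ q
          ≤ (‖b‖ / r) * max (‖c‖ * ‖(v k).1‖ ^ q) (‖d‖ * ‖(v k).2‖ ^ q) :=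
            mul_le_mul_of_nonneg_left hy hbr
        _ = max ((‖b‖ / r) * (‖c‖ * ‖(v k).1‖ ^ q)) ((‖b‖ / r) * (‖d‖ * ‖(v k).2‖ ^ q)) := by
            rw [mul_max_of_nonneg _ _ hbr]
        _ ≤ r * M k := by
            rw [max_le_iff]
            constructor
            · have hcc : (‖b‖ / r) * ‖c‖ ≤ r := by
                have h3 : (‖b‖ / r) * (r ^ 2 / ‖b‖) = r := by field_simp
                calc (‖b‖ / r) * ‖c‖ ≤ (‖b‖ / r) * (r ^ 2 / ‖b‖) :=
                      mul_le_mul_of_nonneg_left hc hbr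
                  _ = r := h3
              calc (‖b‖ / r) * (‖c‖ * ‖(v k).1‖ ^ q) = ((‖b‖ / r) * ‖c‖) * ‖(v k).1‖ ^ q := by
                    ring
                _ ≤ r * ‖(v k).1‖ ^ q := mul_le_mul_of_nonneg_right hcc hun
                _ ≤ r * M k := mul_le_mul_of_nonneg_left hu hr0.le
            · calc (‖b‖ / r) * (‖d‖ * ‖(v k).2‖ ^ q)
                  = ‖d‖ * ((‖b‖ / r) * ‖(v k).2‖ ^ q) := by ring
                _ ≤ r * ((‖b‖ / r) * ‖(v k).2‖ ^ q) :=
                    mul_le_mul_of_nonneg_right hd (mul_nonneg hbr hwn)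
                _ ≤ r * M k := mul_le_mul_of_nonneg_left hw hr0.le
    exact max_le h1 h2
  have est : ∀ k, M k ≤ r ^ k * M 0 := by
    intro k
    induction k with
    | zero => simp
    | succ k ih =>
      calc M (k + 1) ≤ r * M k := step k
        _ ≤ r * (r ^ k * M 0) := mul_le_mul_of_nonneg_left ih hr0.le
        _ = r ^ (k + 1) * M 0 := by ring
  have hg : Tendsto (fun k => r ^ k * M 0) atTop (nhds 0) := by
    have := tendsto_pow_atTop_nhds_zero_of_lt_one hr0.le hr1
    simpa using this.mul_const (M 0)
  have hq0 : q ≠ 0 := by omega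
  have hbr1 : (1 : ℝ) ≤ ‖b‖ / r := (one_le_div hr0).mpr hb
  refine ⟨fun k => (v k).1, fun k => (v k).2, rfl, rfl, fun k => hf1 _, fun k => hf1 _,
    fun k => est k, ?_, ?_⟩
  · refine tendsto_of_pow_le_aux (fun k => norm_nonneg _) hg q hq0 (fun k => ?_)
    exact le_trans (le_max_left _ _) (est k)
  · refine tendsto_of_pow_le_aux (fun k => norm_nonneg _) hg q hq0 (fun k => ?_)
    have : ‖(v k).2‖ ^ q ≤ (‖b‖ / r) * ‖(v k).2‖ ^ q :=
      le_mul_of_one_le_left (pow_nonneg (norm_nonneg _) q) hbr1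
    exact le_trans this (le_trans (le_max_right _ _) (est k))
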